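/- arXiv:2004.02466 — 2 statements merged into one kernel-verified Lean document; each statement's English description precedes it below -/
import Mathlib

section
/- Let T be a positive random variable and X a random variable such that E[T^{-2} | X] and E[T^{-1} | X] are a.s. finite with E[T^{-2} | X] > 0 a.s. Then for any measurable function g(X), the relative-error risk E[((T − g(X))/T)² | X] is a.s. minimized over the value g(X) by g(X) = E[T^{-1}|X] / E[T^{-2}|X]; i.e., for every measurable g, E[((T − μ(X))/T)²] ≤ E[((T − g(X))/T)²] where μ(x) = E[T^{-1}|X=x]/E[T^{-2}|X=x]. -/
open MeasureTheory ProbabilityTheory Filter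

lemma aux_quad {a b : ℝ} (h : ∀ q : ℚ, 0 ≤ a - 2*q*b + (q:ℝ)^2) : b^2 ≤ a := by
  have hS : IsClosed {x : ℝ | 0 ≤ a - 2*x*b + x^2} :=
    isClosed_le continuous_const (by continuity)
  have hsub : Set.range ((↑) : ℚ → ℝ) ⊆ {x : ℝ | 0 ≤ a - 2*x*b + x^2} := by
    rintro x ⟨q, rfl⟩; exact h q
  have huniv : (Set.univ : Set ℝ) ⊆ {x : ℝ | 0 ≤ a - 2*x*b + x^2} := by
    rw [← Rat.denseRange_cast.closure_range]
    calc closure (Set.range ((↑) : ℚ → ℝ))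
        ⊆ closure {x : ℝ | 0 ≤ a - 2*x*b + x^2} := closure_mono hsub
      _ = _ := hS.closure_eq
  have hb := huniv (Set.mem_univ b)
  simp only [Set.mem_setOf_eq] at hb
  nlinarith

lemma aux_pullout {Ω : Type*} {m : MeasurableSpace Ω} [mΩ : MeasurableSpace Ω] (hm : m ≤ mΩ)
    (P : Measure Ω) [IsProbabilityMeasure P] {φ f : Ω → ℝ}
    (hφ : StronglyMeasurable[m] φ) (hφf : Integrable (fun ω => φ ω * f ω) P)
    (hf : Integrable f P) :
    ∫ ω, φ ω * f ω ∂P = ∫ ω, φ ω * (P[f|m]) ω ∂P := by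
  haveI : IsFiniteMeasure (P.trim hm) := isFiniteMeasure_trim hm
  have h1 : P[fun ω => φ ω * f ω|m] =ᵐ[P] fun ω => φ ω * (P[f|m]) ω := by
    have := condExp_mul_of_stronglyMeasurable_left hφ (by simpa [Pi.mul_def] using hφf) hf
    simpa [Pi.mul_def] using this
  have h2 := integral_condExp (μ := P) hm (f := fun ω => φ ω * f ω)
  rw [← h2]
  exact integral_congr_ae h1

theorem aux_main {Ω : Type*} {m : MeasurableSpace Ω} [mΩ : MeasurableSpace Ω] (hm : m ≤ mΩ)
    (P : Measure Ω) [IsProbabilityMeasure P]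
    (T : Ω → ℝ) (hT : Measurable T)
    (hTpos : ∀ᵐ ω ∂P, 0 < T ω)
    (hInt1 : Integrable (fun ω => (T ω)⁻¹) P)
    (hInt2 : Integrable (fun ω => ((T ω) ^ 2)⁻¹) P)
    (hpos2 : ∀ᵐ ω ∂P, 0 < (P[fun ω' => ((T ω') ^ 2)⁻¹ | m]) ω)
    (μ : Ω → ℝ)
    (hμ : ∀ ω, μ ω = (P[fun ω' => (T ω')⁻¹ | m]) ω / (P[fun ω' => ((T ω') ^ 2)⁻¹ | m]) ω)
    (h : Ω → ℝ) (hh : StronglyMeasurable[m] h) (hhW : Measurable h) :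
    ∫⁻ ω, ENNReal.ofReal (((T ω - μ ω) / T ω) ^ 2) ∂P ≤
      ∫⁻ ω, ENNReal.ofReal (((T ω - h ω) / T ω) ^ 2) ∂P := by
  haveI : IsFiniteMeasure (P.trim hm) := isFiniteMeasure_trim hm
  set B := P[fun ω' => (T ω')⁻¹|m] with hBdef
  set A := P[fun ω' => ((T ω') ^ 2)⁻¹|m] with hAdef
  have hBm : StronglyMeasurable[m] B := stronglyMeasurable_condExp
  have hAm : StronglyMeasurable[m] A := stronglyMeasurable_condExp
  have hBmeas : Measurable B := (hBm.mono hm).measurable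
  have hAmeas : Measurable A := (hAm.mono hm).measurable
  have hμm : Measurable[m] μ := by
    have hfe : μ = fun ω => B ω / A ω := funext hμ
    rw [hfe]; exact hBm.measurable.div hAm.measurable
  have hμsm : StronglyMeasurable[m] μ := hμm.stronglyMeasurable
  have hμmeas : Measurable μ := (hμsm.mono hm).measurable
  have hB0 : ∀ᵐ ω ∂P, 0 ≤ B ω := by
    have := condExp_nonneg (μ := P) (m := m) (f := fun ω => (T ω)⁻¹)
      (hTpos.mono fun ω hω => by simp only [Pi.zero_apply]; positivity)
    filter_upwards [this] with ω hω using by simpa using hω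
  -- conditional Cauchy-Schwarz: B² ≤ A a.e.
  have hqall : ∀ q : ℚ, ∀ᵐ ω ∂P, 0 ≤ A ω - 2*q*(B ω) + (q:ℝ)^2 := by
    intro q
    have h0 : 0 ≤ᵐ[P] fun ω => ((T ω)^2)⁻¹ - (2*(q:ℝ)) * (T ω)⁻¹ + (q:ℝ)^2 := by
      filter_upwards [hTpos] with ω hω
      have h1 : ((T ω)⁻¹ - q)^2 = ((T ω)^2)⁻¹ - (2*(q:ℝ)) * (T ω)⁻¹ + (q:ℝ)^2 := by
        rw [← inv_pow]; ring
      simp only [Pi.zero_apply]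
      nlinarith [sq_nonneg ((T ω)⁻¹ - (q:ℝ))]
    have hcond := condExp_nonneg (m := m) (μ := P) h0
    have heq : P[fun ω => ((T ω)^2)⁻¹ - (2*(q:ℝ)) * (T ω)⁻¹ + (q:ℝ)^2|m]
        =ᵐ[P] fun ω => A ω - 2*q*(B ω) + (q:ℝ)^2 := by
      have e0 : (fun ω => ((T ω)^2)⁻¹ - (2*(q:ℝ)) * (T ω)⁻¹ + (q:ℝ)^2)
          = ((fun ω => ((T ω)^2)⁻¹) - (2*(q:ℝ)) • (fun ω => (T ω)⁻¹)) + (fun _ => (q:ℝ)^2) := by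
        funext ω; simp only [Pi.add_apply, Pi.sub_apply, Pi.smul_apply, smul_eq_mul]
      rw [e0]
      have hsmul : Integrable ((2*(q:ℝ)) • (fun ω => (T ω)⁻¹)) P := hInt1.smul _
      calc P[((fun ω => ((T ω)^2)⁻¹) - (2*(q:ℝ)) • (fun ω => (T ω)⁻¹)) + (fun _ => (q:ℝ)^2)|m]
          =ᵐ[P] P[(fun ω => ((T ω)^2)⁻¹) - (2*(q:ℝ)) • (fun ω => (T ω)⁻¹)|m]
              + P[(fun _ : Ω => (q:ℝ)^2)|m] := condExp_add (hInt2.sub hsmul) (integrable_const _) m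
        _ =ᵐ[P] (A - P[(2*(q:ℝ)) • (fun ω => (T ω)⁻¹)|m])
              + P[(fun _ : Ω => (q:ℝ)^2)|m] :=
            EventuallyEq.add (condExp_sub hInt2 hsmul m) EventuallyEq.rfl
        _ =ᵐ[P] (A - (2*(q:ℝ)) • B) + P[(fun _ : Ω => (q:ℝ)^2)|m] :=
            EventuallyEq.add (EventuallyEq.sub EventuallyEq.rfl (condExp_smul _ _ m)) EventuallyEq.rfl
        _ =ᵐ[P] fun ω => A ω - 2*q*(B ω) + (q:ℝ)^2 := by
            rw [condExp_const hm ((q:ℝ)^2)]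
            refine Filter.EventuallyEq.of_eq (funext fun ω => ?_)
            simp only [Pi.add_apply, Pi.sub_apply, Pi.smul_apply, smul_eq_mul]
    filter_upwards [hcond, heq] with ω h1 h2
    rw [← h2]; simpa using h1
  have hCS : ∀ᵐ ω ∂P, (B ω)^2 ≤ A ω := by
    filter_upwards [ae_all_iff.mpr hqall] with ω hω
    exact aux_quad hω
  -- facts about μ
  have hμ0 : ∀ᵐ ω ∂P, 0 ≤ μ ω := by
    filter_upwards [hB0, hpos2] with ω h1 h2
    rw [hμ ω]; exact div_nonneg h1 h2.le
  have hμA : ∀ᵐ ω ∂P, μ ω * A ω = B ω := by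
    filter_upwards [hpos2] with ω h2
    rw [hμ ω]; field_simp
  have hμ2A : ∀ᵐ ω ∂P, A ω * (μ ω)^2 ≤ 1 := by
    filter_upwards [hpos2, hCS] with ω h2 h3
    rw [hμ ω, div_pow]
    have he : A ω * ((B ω)^2/(A ω)^2) = (B ω)^2 / A ω := by
      field_simp
    rw [he]
    exact (div_le_one h2).mpr h3
  set R : Ω → ℝ := fun ω => 1 - μ ω * B ω with hRdef
  have hRmeas : Measurable R := measurable_const.sub (hμmeas.mul hBmeas)
  have hμB01 : ∀ᵐ ω ∂P, 0 ≤ μ ω * B ω ∧ μ ω * B ω ≤ 1 := by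
    filter_upwards [hpos2, hCS, hB0] with ω h2 h3 h4
    refine ⟨by rw [hμ ω]; exact mul_nonneg (div_nonneg h4 h2.le) h4, ?_⟩
    rw [hμ ω, div_mul_eq_mul_div]
    refine (div_le_one h2).mpr ?_
    nlinarith
  have hRint : Integrable R P := by
    refine Integrable.mono' (integrable_const 1) hRmeas.aestronglyMeasurable ?_
    filter_upwards [hμB01] with ω hω
    have hre : R ω = 1 - μ ω * B ω := rfl
    rw [Real.norm_eq_abs, hre, abs_le]
    constructor <;> [linarith [hω.2]; linarith [hω.1]]
  -- pointwise expansion of the risk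
  have expand : ∀ (φ : Ω → ℝ), (fun ω => ((T ω - φ ω)/T ω)^2)
      =ᵐ[P] fun ω => 1 - 2*(φ ω * (T ω)⁻¹) + (φ ω)^2 * ((T ω)^2)⁻¹ := by
    intro φ
    filter_upwards [hTpos] with ω hω
    have hne : T ω ≠ 0 := ne_of_gt hω
    field_simp
    ring
  -- key risk decomposition
  have split : ∀ (v w : Ω → ℝ), Integrable v P → Integrable w P →
      (∫ ω, (1 - 2 * v ω + w ω) ∂P) = 1 - 2 * (∫ ω, v ω ∂P) + ∫ ω, w ω ∂P := by
    intro v w hv hw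
    rw [integral_add (f := fun ω => 1 - 2 * v ω) ((integrable_const 1).sub (hv.const_mul 2)) hw,
        integral_sub (integrable_const 1) (hv.const_mul 2), integral_const_mul]
    simp
  have key : ∀ (φ : Ω → ℝ), StronglyMeasurable[m] φ →
      Integrable (fun ω => φ ω * (T ω)⁻¹) P →
      Integrable (fun ω => (φ ω)^2 * ((T ω)^2)⁻¹) P →
      Integrable (fun ω => ((T ω - φ ω)/T ω)^2) P ∧
      Integrable (fun ω => A ω * (φ ω - μ ω)^2) P ∧
      ∫ ω, ((T ω - φ ω)/T ω)^2 ∂P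
        = (∫ ω, A ω * (φ ω - μ ω)^2 ∂P) + ∫ ω, R ω ∂P := by
    intro φ hφm hφ1 hφ2
    have hφ2m : StronglyMeasurable[m] (fun ω => (φ ω)^2) :=
      (hφm.measurable.pow_const 2).stronglyMeasurable
    have hint : Integrable (fun ω => 1 - 2*(φ ω * (T ω)⁻¹) + (φ ω)^2 * ((T ω)^2)⁻¹) P :=
      ((integrable_const 1).sub (hφ1.const_mul 2)).add hφ2
    have hrint : Integrable (fun ω => ((T ω - φ ω)/T ω)^2) P := hint.congr (expand φ).symm
    have p1 : ∫ ω, φ ω * (T ω)⁻¹ ∂P = ∫ ω, φ ω * B ω ∂P := aux_pullout hm P hφm hφ1 hInt1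
    have p2 : ∫ ω, (φ ω)^2 * ((T ω)^2)⁻¹ ∂P = ∫ ω, (φ ω)^2 * A ω ∂P :=
      aux_pullout hm P hφ2m hφ2 hInt2
    have hφB : Integrable (fun ω => φ ω * B ω) P := by
      have h1 := condExp_mul_of_stronglyMeasurable_left (μ := P) hφm
        (by simpa [Pi.mul_def] using hφ1) hInt1
      exact integrable_condExp.congr (by simpa [Pi.mul_def] using h1)
    have hφA : Integrable (fun ω => (φ ω)^2 * A ω) P := by
      have h1 := condExp_mul_of_stronglyMeasurable_left (μ := P) hφ2m
        (by simpa [Pi.mul_def] using hφ2) hInt2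
      exact integrable_condExp.congr (by simpa [Pi.mul_def] using h1)
    have e1 : ∫ ω, ((T ω - φ ω)/T ω)^2 ∂P
        = ∫ ω, (1 - 2*(φ ω * B ω) + (φ ω)^2 * A ω) ∂P := by
      calc ∫ ω, ((T ω - φ ω)/T ω)^2 ∂P
          = ∫ ω, (1 - 2*(φ ω * (T ω)⁻¹) + (φ ω)^2 * ((T ω)^2)⁻¹) ∂P :=
            integral_congr_ae (expand φ)
        _ = 1 - 2 * (∫ ω, φ ω * (T ω)⁻¹ ∂P) + ∫ ω, (φ ω)^2 * ((T ω)^2)⁻¹ ∂P :=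
            split _ _ hφ1 hφ2
        _ = 1 - 2 * (∫ ω, φ ω * B ω ∂P) + ∫ ω, (φ ω)^2 * A ω ∂P := by rw [p1, p2]
        _ = ∫ ω, (1 - 2*(φ ω * B ω) + (φ ω)^2 * A ω) ∂P := (split _ _ hφB hφA).symm
    have e2 : ∀ᵐ ω ∂P, 1 - 2*(φ ω * B ω) + (φ ω)^2 * A ω
        = A ω * (φ ω - μ ω)^2 + R ω := by
      filter_upwards [hμA] with ω hω
      have hre : R ω = 1 - μ ω * B ω := rfl
      rw [hre]
      linear_combination (2 * φ ω - μ ω) * hω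
    have hAφμ : Integrable (fun ω => A ω * (φ ω - μ ω)^2) P := by
      have he : (fun ω => A ω * (φ ω - μ ω)^2)
          =ᵐ[P] fun ω => (1 - 2*(φ ω * B ω) + (φ ω)^2 * A ω) - R ω := by
        filter_upwards [e2] with ω hω; linarith
      exact (((((integrable_const 1).sub (hφB.const_mul 2)).add hφA).sub hRint).congr he.symm)
    refine ⟨hrint, hAφμ, ?_⟩
    rw [e1, integral_congr_ae e2, integral_add hAφμ hRint]
  -- LHS bound via truncation and Fatou
  have lhs_bound : ∫⁻ ω, ENNReal.ofReal (((T ω - μ ω) / T ω) ^ 2) ∂P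
      ≤ ENNReal.ofReal (∫ ω, R ω ∂P) := by
    set φ : ℕ → Ω → ℝ := fun n ω => min (μ ω) (n:ℝ) with hφdef
    have hφsm : ∀ n, StronglyMeasurable[m] (φ n) :=
      fun n => (hμm.min measurable_const).stronglyMeasurable
    have hφW : ∀ n, Measurable (φ n) := fun n => hμmeas.min measurable_const
    have hφbd : ∀ᵐ ω ∂P, ∀ n : ℕ, 0 ≤ φ n ω ∧ φ n ω ≤ (n:ℝ) := by
      filter_upwards [hμ0] with ω hω n
      exact ⟨le_min hω (Nat.cast_nonneg n), min_le_right _ _⟩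
    have hφ1 : ∀ n, Integrable (fun ω => φ n ω * (T ω)⁻¹) P := by
      intro n
      refine Integrable.mono' (hInt1.norm.const_mul (n:ℝ))
        ((hφW n).mul hT.inv).aestronglyMeasurable ?_
      filter_upwards [hφbd] with ω hω
      obtain ⟨h0, h1⟩ := hω n
      rw [norm_mul, Real.norm_eq_abs (φ n ω), abs_of_nonneg h0]
      exact mul_le_mul_of_nonneg_right h1 (norm_nonneg _)
    have hφ2 : ∀ n, Integrable (fun ω => (φ n ω)^2 * ((T ω)^2)⁻¹) P := by
      intro n
      refine Integrable.mono' (hInt2.norm.const_mul ((n:ℝ)^2))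
        (((hφW n).pow_const 2).mul ((hT.pow_const 2).inv)).aestronglyMeasurable ?_
      filter_upwards [hφbd] with ω hω
      obtain ⟨h0, h1⟩ := hω n
      rw [norm_mul]
      have hb : ‖(φ n ω)^2‖ ≤ (n:ℝ)^2 := by
        rw [Real.norm_eq_abs, abs_of_nonneg (sq_nonneg _)]
        nlinarith
      exact mul_le_mul_of_nonneg_right hb (norm_nonneg _)
    have hkey := fun n => key (φ n) (hφsm n) (hφ1 n) (hφ2 n)
    have hQtend : Tendsto (fun n => ∫ ω, A ω * (φ n ω - μ ω)^2 ∂P) atTop (nhds 0) := by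
      have h00 : (0:ℝ) = ∫ _ω, (0:ℝ) ∂P := by simp
      rw [h00]
      refine tendsto_integral_of_dominated_convergence (fun _ => (1:ℝ))
        (fun n => (hAmeas.mul (((hφW n).sub hμmeas).pow_const 2)).aestronglyMeasurable)
        (integrable_const 1) ?_ ?_
      · intro n
        filter_upwards [hμ0, hμ2A, hpos2] with ω h0 h1 h2
        rw [Real.norm_eq_abs, abs_of_nonneg (mul_nonneg h2.le (sq_nonneg _))]
        have hle : (φ n ω - μ ω)^2 ≤ (μ ω)^2 := by
          have : 0 ≤ φ n ω := le_min h0 (Nat.cast_nonneg n)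
          have : φ n ω ≤ μ ω := min_le_left _ _
          nlinarith [le_min h0 (Nat.cast_nonneg n), min_le_left (μ ω) (n:ℝ)]
        nlinarith
      · filter_upwards [] with ω
        refine tendsto_atTop_of_eventually_const (i₀ := ⌈μ ω⌉₊) fun n hn => ?_
        have hle : μ ω ≤ (n:ℝ) := le_trans (Nat.le_ceil _) (Nat.cast_le.mpr hn)
        simp [hφdef, min_eq_left hle]
    have hrn : ∀ n, ∫⁻ ω, ENNReal.ofReal (((T ω - φ n ω)/T ω)^2) ∂P
        = ENNReal.ofReal ((∫ ω, A ω * (φ n ω - μ ω)^2 ∂P) + ∫ ω, R ω ∂P) := by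
      intro n
      rw [← (hkey n).2.2,
        ← ofReal_integral_eq_lintegral_ofReal (hkey n).1 (ae_of_all _ fun ω => sq_nonneg _)]
    have fatou : ∫⁻ ω, ENNReal.ofReal (((T ω - μ ω)/T ω)^2) ∂P ≤
        liminf (fun n => ∫⁻ ω, ENNReal.ofReal (((T ω - φ n ω)/T ω)^2) ∂P) atTop := by
      have hmeasn : ∀ n, Measurable fun ω => ENNReal.ofReal (((T ω - φ n ω)/T ω)^2) :=
        fun n => (((hT.sub (hφW n)).div hT).pow_const 2).ennreal_ofReal
      refine le_trans (le_of_eq (lintegral_congr fun ω => ?_)) (lintegral_liminf_le hmeasn)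
      refine (Filter.Tendsto.liminf_eq ?_).symm
      refine tendsto_atTop_of_eventually_const (i₀ := ⌈μ ω⌉₊) fun n hn => ?_
      have hle : μ ω ≤ (n:ℝ) := le_trans (Nat.le_ceil _) (Nat.cast_le.mpr hn)
      simp [hφdef, min_eq_left hle]
    have htend : Tendsto
        (fun n => ENNReal.ofReal ((∫ ω, A ω * (φ n ω - μ ω)^2 ∂P) + ∫ ω, R ω ∂P)) atTop
        (nhds (ENNReal.ofReal (∫ ω, R ω ∂P))) := by
      have h0 : Tendsto (fun n => (∫ ω, A ω * (φ n ω - μ ω)^2 ∂P) + ∫ ω, R ω ∂P) atTop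
          (nhds (0 + ∫ ω, R ω ∂P)) := hQtend.add_const _
      rw [zero_add] at h0
      exact (ENNReal.continuous_ofReal.tendsto _).comp h0
    calc ∫⁻ ω, ENNReal.ofReal (((T ω - μ ω) / T ω) ^ 2) ∂P
        ≤ liminf (fun n => ∫⁻ ω, ENNReal.ofReal (((T ω - φ n ω)/T ω)^2) ∂P) atTop := fatou
      _ = liminf (fun n =>
            ENNReal.ofReal ((∫ ω, A ω * (φ n ω - μ ω)^2 ∂P) + ∫ ω, R ω ∂P)) atTop := by
          refine liminf_congr (Eventually.of_forall fun n => hrn n)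
      _ = ENNReal.ofReal (∫ ω, R ω ∂P) := htend.liminf_eq
  -- RHS
  by_cases hfin : ∫⁻ ω, ENNReal.ofReal (((T ω - h ω) / T ω) ^ 2) ∂P = ⊤
  · rw [hfin]; exact le_top
  · have hmeasrisk : Measurable fun ω => ((T ω - h ω)/T ω)^2 :=
      ((hT.sub hhW).div hT).pow_const 2
    have hnn : 0 ≤ᵐ[P] fun ω => ((T ω - h ω)/T ω)^2 := ae_of_all _ fun ω => sq_nonneg _
    have hrint : Integrable (fun ω => ((T ω - h ω)/T ω)^2) P := by
      refine ⟨hmeasrisk.aestronglyMeasurable, ?_⟩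
      rw [hasFiniteIntegral_iff_ofReal hnn]
      exact lt_top_iff_ne_top.mpr hfin
    set u : Ω → ℝ := fun ω => (T ω - h ω)/T ω with hudef
    have hu2 : Integrable (fun ω => (u ω)^2) P := hrint
    have humeas : Measurable u := (hT.sub hhW).div hT
    have hu : Integrable u P := by
      refine Integrable.mono' ((hu2.add (integrable_const 1)).div_const 2)
        humeas.aestronglyMeasurable (ae_of_all _ fun ω => ?_)
      rw [Real.norm_eq_abs]
      simp only [Pi.add_apply]
      nlinarith [sq_nonneg (|u ω| - 1), sq_abs (u ω)]
    have hh1 : Integrable (fun ω => h ω * (T ω)⁻¹) P := by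
      refine ((integrable_const 1).sub hu).congr ?_
      filter_upwards [hTpos] with ω hω
      have hne : T ω ≠ 0 := ne_of_gt hω
      show 1 - (T ω - h ω)/T ω = h ω * (T ω)⁻¹
      field_simp
      ring
    have hh2 : Integrable (fun ω => (h ω)^2 * ((T ω)^2)⁻¹) P := by
      refine ((hu2.sub (hu.const_mul 2)).add (integrable_const 1)).congr ?_
      filter_upwards [hTpos] with ω hω
      have hne : T ω ≠ 0 := ne_of_gt hω
      show ((T ω - h ω)/T ω)^2 - 2*((T ω - h ω)/T ω) + 1 = (h ω)^2 * ((T ω)^2)⁻¹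
      field_simp
      ring
    obtain ⟨hri, hQi, heq⟩ := key h hh hh1 hh2
    rw [← ofReal_integral_eq_lintegral_ofReal hri hnn, heq]
    refine le_trans lhs_bound (ENNReal.ofReal_le_ofReal ?_)
    have hQ0 : 0 ≤ ∫ ω, A ω * (h ω - μ ω)^2 ∂P := by
      refine integral_nonneg_of_ae ?_
      filter_upwards [hpos2] with ω h2
      exact mul_nonneg h2.le (sq_nonneg _)
    linarith

/-- the relative-error risk `E[((T − g(X))/T)²]` is minimized over
measurable predictors `g(X)` by `μ(X) = E[T⁻¹|X] / E[T⁻²|X]`. -/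
theorem stmt_2 {Ω : Type*} [MeasurableSpace Ω] (P : Measure Ω)
    [IsProbabilityMeasure P]
    (T X : Ω → ℝ) (hT : Measurable T) (hX : Measurable X)
    (hTpos : ∀ᵐ ω ∂P, 0 < T ω)
    (hInt1 : Integrable (fun ω => (T ω)⁻¹) P)
    (hInt2 : Integrable (fun ω => ((T ω) ^ 2)⁻¹) P)
    (hpos2 : ∀ᵐ ω ∂P,
      0 < (P[fun ω' => ((T ω') ^ 2)⁻¹
          | MeasurableSpace.comap X (inferInstance : MeasurableSpace ℝ)]) ω)
    (μ : Ω → ℝ)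
    (hμ : ∀ ω, μ ω =
      (P[fun ω' => (T ω')⁻¹
          | MeasurableSpace.comap X (inferInstance : MeasurableSpace ℝ)]) ω /
      (P[fun ω' => ((T ω') ^ 2)⁻¹
          | MeasurableSpace.comap X (inferInstance : MeasurableSpace ℝ)]) ω) :
    ∀ g : ℝ → ℝ, Measurable g →
      ∫⁻ ω, ENNReal.ofReal (((T ω - μ ω) / T ω) ^ 2) ∂P ≤
        ∫⁻ ω, ENNReal.ofReal (((T ω - g (X ω)) / T ω) ^ 2) ∂P := by
  intro g hg
  have hXm : Measurable[MeasurableSpace.comap X (inferInstance : MeasurableSpace ℝ)] X :=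
    measurable_iff_comap_le.mpr le_rfl
  exact aux_main hX.comap_le P T hT hTpos hInt1 hInt2 hpos2 μ hμ
    (fun ω => g (X ω)) ((hg.comp hXm).stronglyMeasurable) (hg.comp hX)
end

section
/- Let X₁, ..., Xₙ be i.i.d. with bounded density, Zᵢ ∈ [0, B] a.s. i.i.d. (and Zᵢ measurable with respect to the i-th observation), K a bounded nonnegative kernel supported in [−1,1], γ ∈ {0,1,2}, and S̃(x) = (nh)^{-1} Σᵢ Zᵢ(Xᵢ−x)^γ K((Xᵢ−x)/h). Then there exists ε₀ > 0 such that for each fixed x, P(|S̃(x) − E[S̃(x)]| > ε₀ √(log n/(n h))) ≤ 2 n^{−3/2} for all n large enough, provided nh/log n → ∞. -/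
open MeasureTheory ProbabilityTheory Filter Real

lemma exp_le_one_add_add_sq {u : ℝ} (hu : |u| ≤ 1) : Real.exp u ≤ 1 + u + u ^ 2 := by
  have h := Real.exp_bound hu (n := 2) (by norm_num)
  have h2 : ∑ m ∈ Finset.range 2, u ^ m / m.factorial = 1 + u := by
    simp [Finset.sum_range_succ]
  rw [h2] at h
  have h3 : |u| ^ 2 * ((Nat.succ 2 : ℕ) / ((Nat.factorial 2 : ℕ) * (2:ℕ))) = u ^ 2 * (3/4) := by
    rw [sq_abs]; norm_num [Nat.factorial]
  rw [h3] at h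
  have := (abs_le.mp h).2
  nlinarith [sq_nonneg u]

lemma my_integrable_of_bound {Ω : Type*} [MeasurableSpace Ω] {P : Measure Ω}
    [IsProbabilityMeasure P] {g : Ω → ℝ} (hg : Measurable g) {C : ℝ}
    (hb : ∀ᵐ ω ∂P, |g ω| ≤ C) : Integrable g P :=
  ⟨hg.aestronglyMeasurable, HasFiniteIntegral.of_bounded (C := C)
    (by simpa [Real.norm_eq_abs] using hb)⟩

lemma my_mgf_le {Ω : Type*} [MeasurableSpace Ω] {P : Measure Ω} [IsProbabilityMeasure P]
    {W : Ω → ℝ} (hm : Measurable W) {c s t : ℝ} (ht : 0 ≤ t) (htc : t * c ≤ 1)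
    (hb : ∀ᵐ ω ∂P, |W ω| ≤ c) (hmean : ∫ ω, W ω ∂P = 0)
    (hvar : ∫ ω, (W ω) ^ 2 ∂P ≤ s) :
    mgf W P t ≤ Real.exp (t ^ 2 * s) := by
  have hWint : Integrable W P := my_integrable_of_bound hm hb
  have hW2int : Integrable (fun ω => (W ω) ^ 2) P := by
    refine my_integrable_of_bound (hm.pow_const 2) (C := c ^ 2) ?_
    filter_upwards [hb] with ω hω
    rw [abs_pow] ; exact pow_le_pow_left₀ (abs_nonneg _) hω 2
  have hexp_int : Integrable (fun ω => Real.exp (t * W ω)) P := by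
    refine my_integrable_of_bound (hm.const_mul t).exp (C := Real.exp (t * c)) ?_
    filter_upwards [hb] with ω hω
    rw [abs_of_pos (Real.exp_pos _), Real.exp_le_exp]
    calc t * W ω ≤ t * |W ω| := by nlinarith [le_abs_self (W ω)]
      _ ≤ t * c := by nlinarith
  have key : mgf W P t ≤ ∫ ω, (1 + t * W ω + t ^ 2 * (W ω) ^ 2) ∂P := by
    refine integral_mono_ae hexp_int ?_ ?_
    · exact (integrable_const 1).add (hWint.const_mul t) |>.add (hW2int.const_mul (t ^ 2))
    · filter_upwards [hb] with ω hω
      have h1 : |t * W ω| ≤ 1 := by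
        rw [abs_mul, abs_of_nonneg ht]
        calc t * |W ω| ≤ t * c := by nlinarith
          _ ≤ 1 := htc
      have := exp_le_one_add_add_sq h1
      calc Real.exp (t * W ω) ≤ 1 + t * W ω + (t * W ω) ^ 2 := this
        _ = 1 + t * W ω + t ^ 2 * (W ω) ^ 2 := by ring
  have h2 : ∫ ω, (1 + t * W ω + t ^ 2 * (W ω) ^ 2) ∂P = 1 + t ^ 2 * ∫ ω, (W ω) ^ 2 ∂P := by
    have i1 : Integrable (fun ω => 1 + t * W ω) P :=
      (integrable_const 1).add (hWint.const_mul t)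
    rw [integral_add i1 (hW2int.const_mul (t ^ 2)),
      integral_add (integrable_const 1) (hWint.const_mul t), integral_const,
      integral_const_mul, integral_const_mul, hmean]
    simp
  calc mgf W P t ≤ 1 + t ^ 2 * ∫ ω, (W ω) ^ 2 ∂P := by rw [← h2]; exact key
    _ ≤ 1 + t ^ 2 * s := by nlinarith [sq_nonneg t]
    _ ≤ Real.exp (t ^ 2 * s) := by linarith [Real.add_one_le_exp (t ^ 2 * s)]

lemma my_bernstein {Ω : Type*} [MeasurableSpace Ω] {P : Measure Ω} [IsProbabilityMeasure P]
    (n : ℕ) (W : ℕ → Ω → ℝ) (hm : ∀ i, Measurable (W i))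
    (hind : iIndepFun W P)
    {c s t T : ℝ} (ht : 0 ≤ t) (htc : t * c ≤ 1)
    (hb : ∀ i, ∀ᵐ ω ∂P, |W i ω| ≤ c)
    (hmean : ∀ i, ∫ ω, W i ω ∂P = 0)
    (hvar : ∀ i, ∫ ω, (W i ω) ^ 2 ∂P ≤ s) :
    (P {ω | T ≤ ∑ i ∈ Finset.range n, W i ω}).toReal ≤
      Real.exp (-(t * T) + t ^ 2 * n * s) := by
  have hexp_int : Integrable (fun ω => Real.exp (t * ∑ i ∈ Finset.range n, W i ω)) P := by
    refine my_integrable_of_bound (by measurability) (C := Real.exp (t * (n * c))) ?_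
    have hball : ∀ᵐ ω ∂P, ∀ i ∈ Finset.range n, |W i ω| ≤ c :=
      (ae_ball_iff (Finset.range n).countable_toSet).mpr fun i _ => hb i
    filter_upwards [hball] with ω hω
    rw [abs_of_pos (Real.exp_pos _), Real.exp_le_exp]
    have hsum : ∑ i ∈ Finset.range n, W i ω ≤ n * c := by
      calc ∑ i ∈ Finset.range n, W i ω ≤ ∑ i ∈ Finset.range n, c :=
            Finset.sum_le_sum fun i hi => (abs_le.mp (hω i hi)).2
        _ = n * c := by simp [mul_comm]
    nlinarith [hsum]
  calc (P {ω | T ≤ ∑ i ∈ Finset.range n, W i ω}).toReal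
      ≤ Real.exp (-t * T) * mgf (∑ i ∈ Finset.range n, W i) P t := by
        have := measure_ge_le_exp_mul_mgf (X := ∑ i ∈ Finset.range n, W i) (μ := P) T ht
          (by simpa [Finset.sum_apply] using hexp_int)
        simpa [Finset.sum_apply, measureReal_def] using this
    _ = Real.exp (-t * T) * ∏ i ∈ Finset.range n, mgf (W i) P t := by
        rw [hind.mgf_sum hm]
    _ ≤ Real.exp (-t * T) * ∏ i ∈ Finset.range n, Real.exp (t ^ 2 * s) := by
        refine mul_le_mul_of_nonneg_left ?_ (Real.exp_pos _).le
        exact Finset.prod_le_prod (fun i _ => mgf_nonneg)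
          (fun i _ => my_mgf_le (hm i) ht htc (hb i) (hmean i) (hvar i))
    _ = Real.exp (-(t * T) + t ^ 2 * n * s) := by
        rw [Finset.prod_const, ← Real.exp_nat_mul, ← Real.exp_add]
        simp [Finset.card_range]; ring_nf

set_option maxHeartbeats 1000000 in
/-- pointwise concentration of the kernel-weighted empirical
average `S̃(x)`: for some `ε₀ > 0`,
`P(|S̃(x) − E S̃(x)| > ε₀ √(log n/(nh))) ≤ 2 n^{−3/2}` for all large `n`. -/
theorem stmt_10 {Ω : Type*} [MeasurableSpace Ω] (P : Measure Ω)
    [IsProbabilityMeasure P]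
    (V : ℕ → Ω → ℝ × ℝ) (hmeas : ∀ i, Measurable (V i))
    (hindep : iIndepFun V P)
    (hident : ∀ i, IdentDistrib (V i) (V 0) P P)
    (B : ℝ) (hZb : ∀ i, ∀ᵐ ω ∂P, 0 ≤ (V i ω).2 ∧ (V i ω).2 ≤ B)
    (f : ℝ → ℝ) (hfm : Measurable f) (hf0 : ∀ u, 0 ≤ f u)
    (hfb : ∃ M, ∀ u, f u ≤ M)
    (hdens : P.map (fun ω => (V 0 ω).1) =
      volume.withDensity fun u => ENNReal.ofReal (f u))
    (K : ℝ → ℝ) (hKm : Measurable K) (hK0 : ∀ v, 0 ≤ K v)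
    (hKb : ∃ B', ∀ v, K v ≤ B')
    (hKsupp : ∀ v, K v ≠ 0 → v ∈ Set.Icc (-1 : ℝ) 1)
    (γ : ℕ) (hγ : γ ≤ 2)
    (h : ℕ → ℝ) (hh : ∀ n, 0 < h n ∧ h n < 1)
    (hrate : Tendsto (fun n : ℕ => (n : ℝ) * h n / Real.log n) atTop atTop)
    (S : ℕ → ℝ → Ω → ℝ)
    (hS : ∀ n x ω, S n x ω = ((n : ℝ) * h n)⁻¹ *
      ∑ i ∈ Finset.range n,
        (V i ω).2 * ((V i ω).1 - x) ^ γ * K (((V i ω).1 - x) / h n)) :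
    ∃ ε₀ : ℝ, 0 < ε₀ ∧ ∀ x : ℝ, ∃ N : ℕ, ∀ n ≥ N,
      (P {ω | ε₀ * Real.sqrt (Real.log n / ((n : ℝ) * h n)) <
          |S n x ω - ∫ ω', S n x ω' ∂P|}).toReal ≤
        2 * (n : ℝ) ^ (-(3 : ℝ) / 2) := by
  classical
  obtain ⟨M, hM⟩ := hfb
  obtain ⟨B', hB'⟩ := hKb
  set bB : ℝ := max B 0 + 1 with hbB
  set bK : ℝ := max B' 0 + 1 with hbK
  set bM : ℝ := max M 0 + 1 with hbM
  set b : ℝ := bB * bK with hb_def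
  set c : ℝ := 2 * b with hc_def
  set C : ℝ := 2 * bM * b ^ 2 with hC_def
  have hbB1 : (1:ℝ) ≤ bB := by rw [hbB]; linarith [le_max_right B (0:ℝ)]
  have hbK1 : (1:ℝ) ≤ bK := by rw [hbK]; linarith [le_max_right B' (0:ℝ)]
  have hbM1 : (1:ℝ) ≤ bM := by rw [hbM]; linarith [le_max_right M (0:ℝ)]
  have hb1 : (1:ℝ) ≤ b := by nlinarith
  have hbpos : (0:ℝ) < b := by linarith
  have hcpos : (0:ℝ) < c := by simp [hc_def]; linarith
  have hCpos : (0:ℝ) < C := by positivity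
  set ε₀ : ℝ := Real.sqrt (6 * C) with hε₀
  have hε₀pos : 0 < ε₀ := Real.sqrt_pos.mpr (by positivity)
  have hε₀sq : ε₀ ^ 2 = 6 * C := Real.sq_sqrt (by positivity)
  refine ⟨ε₀, hε₀pos, fun x => ?_⟩
  -- choose N
  have hev : ∀ᶠ n : ℕ in atTop, (3 * c / ε₀) ^ 2 ≤ (n : ℝ) * h n / Real.log n ∧ 2 ≤ n :=
    (hrate.eventually_ge_atTop ((3 * c / ε₀) ^ 2)).and (eventually_ge_atTop 2)
  obtain ⟨N, hN⟩ := eventually_atTop.mp hev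
  refine ⟨N, fun n hn => ?_⟩
  obtain ⟨hratio, hn2⟩ := hN n hn
  have hhn : 0 < h n := (hh n).1
  have hhn1 : h n < 1 := (hh n).2
  have hn2R : (2:ℝ) ≤ (n:ℝ) := by exact_mod_cast hn2
  have hnpos : (0:ℝ) < n := by linarith
  have hlogpos : 0 < Real.log n := Real.log_pos (by linarith)
  have hnh : 0 < (n:ℝ) * h n := by positivity
  -- the building blocks
  set g : ℝ × ℝ → ℝ := fun p => p.2 * (p.1 - x) ^ γ * K ((p.1 - x) / h n) with hg_def
  have hgmeas : Measurable g := by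
    apply Measurable.mul
    apply Measurable.mul measurable_snd
    · exact ((measurable_fst.sub measurable_const).pow_const γ)
    · exact hKm.comp ((measurable_fst.sub measurable_const).div_const _)
  set μY : ℝ := ∫ ω, g (V 0 ω) ∂P with hμY_def
  set W : ℕ → Ω → ℝ := fun i ω => g (V i ω) - μY with hW_def
  have hWmeas : ∀ i, Measurable (W i) := fun i => (hgmeas.comp (hmeas i)).sub_const _
  have hYb : ∀ i, ∀ᵐ ω ∂P, |g (V i ω)| ≤ b := by
    intro i
    filter_upwards [hZb i] with ω hω
    by_cases hK : K (((V i ω).1 - x) / h n) = 0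
    · simp [hg_def, hK]; linarith
    · have hmem := hKsupp _ hK
      rw [Set.mem_Icc] at hmem
      have hXx : |(V i ω).1 - x| ≤ 1 := by
        have hd : ((V i ω).1 - x) = ((V i ω).1 - x) / h n * h n :=
          (div_mul_cancel₀ _ hhn.ne').symm
        rw [abs_le]
        constructor
        · nlinarith [hmem.1]
        · nlinarith [hmem.2]
      have h1 : |(V i ω).2| ≤ bB := by
        rw [abs_of_nonneg hω.1]; calc (V i ω).2 ≤ B := hω.2
          _ ≤ bB := by simp [hbB]; linarith [le_max_left B (0:ℝ)]
      have h2 : |((V i ω).1 - x) ^ γ| ≤ 1 := by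
        rw [abs_pow]; exact pow_le_one₀ (abs_nonneg _) hXx
      have h3 : |K (((V i ω).1 - x) / h n)| ≤ bK := by
        rw [abs_of_nonneg (hK0 _)]
        calc K _ ≤ B' := hB' _
          _ ≤ bK := by simp [hbK]; linarith [le_max_left B' (0:ℝ)]
      calc |g (V i ω)| = |(V i ω).2| * |((V i ω).1 - x) ^ γ| *
            |K (((V i ω).1 - x) / h n)| := by rw [hg_def]; rw [abs_mul, abs_mul]
        _ ≤ bB * 1 * bK :=
            mul_le_mul (mul_le_mul h1 h2 (abs_nonneg _) (by linarith)) h3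
              (abs_nonneg _) (by nlinarith)
        _ = b := by rw [hb_def]; ring
  have hYint : ∀ i, Integrable (fun ω => g (V i ω)) P := fun i =>
    my_integrable_of_bound (hgmeas.comp (hmeas i)) (hYb i)
  have hμb : |μY| ≤ b := by
    rw [hμY_def]
    have := norm_integral_le_of_norm_le_const (μ := P) (f := fun ω => g (V 0 ω)) (C := b)
      (by simpa [Real.norm_eq_abs] using hYb 0)
    simpa [Real.norm_eq_abs] using this
  have hWb : ∀ i, ∀ᵐ ω ∂P, |W i ω| ≤ c := by
    intro i
    filter_upwards [hYb i] with ω hω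
    calc |W i ω| ≤ |g (V i ω)| + |μY| := abs_sub _ _
      _ ≤ b + b := add_le_add hω hμb
      _ = c := by rw [hc_def]; ring
  have hident' : ∀ i, ∫ ω, g (V i ω) ∂P = μY := by
    intro i
    rw [hμY_def]
    exact ((hident i).comp hgmeas).integral_eq
  have hWmean : ∀ i, ∫ ω, W i ω ∂P = 0 := by
    intro i
    rw [hW_def]
    simp only
    rw [integral_sub (hYint i) (integrable_const _), hident' i, integral_const]
    simp
  have hWindep : iIndepFun W P := by
    have := hindep.comp (fun _ : ℕ => fun p : ℝ × ℝ => g p - μY)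
      (fun _ => hgmeas.sub_const _)
    exact this
  -- variance bound
  have hvar : ∀ i, ∫ ω, (W i ω) ^ 2 ∂P ≤ C * h n := by
    set A : Set Ω := (fun ω => (V 0 ω).1) ⁻¹' Set.Icc (x - h n) (x + h n) with hA_def
    have hAmeas : MeasurableSet A := (hmeas 0).fst measurableSet_Icc
    have hPA : (P A).toReal ≤ bM * (2 * h n) := by
      have h1 : P A = (P.map (fun ω => (V 0 ω).1)) (Set.Icc (x - h n) (x + h n)) :=
        (Measure.map_apply (hmeas 0).fst measurableSet_Icc).symm
      have h2 : (P.map (fun ω => (V 0 ω).1)) (Set.Icc (x - h n) (x + h n)) ≤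
          ENNReal.ofReal (bM * (2 * h n)) := by
        rw [hdens, withDensity_apply _ measurableSet_Icc]
        calc ∫⁻ u in Set.Icc (x - h n) (x + h n), ENNReal.ofReal (f u) ∂volume
            ≤ ∫⁻ _ in Set.Icc (x - h n) (x + h n), ENNReal.ofReal bM ∂volume := by
              refine lintegral_mono fun u => ENNReal.ofReal_le_ofReal ?_
              calc f u ≤ M := hM u
                _ ≤ bM := by rw [hbM]; linarith [le_max_left M (0:ℝ)]
          _ = ENNReal.ofReal bM * volume (Set.Icc (x - h n) (x + h n)) :=
              setLIntegral_const _ _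
          _ = ENNReal.ofReal bM * ENNReal.ofReal (2 * h n) := by
              rw [Real.volume_Icc]
              congr 1
              ring
          _ = ENNReal.ofReal (bM * (2 * h n)) :=
              (ENNReal.ofReal_mul (by positivity)).symm
      rw [h1]
      exact ENNReal.toReal_le_of_le_ofReal (by positivity) h2
    have hY2int : Integrable (fun ω => (g (V 0 ω)) ^ 2) P := by
      refine my_integrable_of_bound ((hgmeas.comp (hmeas 0)).pow_const 2) (C := b ^ 2) ?_
      filter_upwards [hYb 0] with ω hω
      rw [abs_pow]
      exact pow_le_pow_left₀ (abs_nonneg _) hω 2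
    have hY0sq : ∫ ω, (g (V 0 ω)) ^ 2 ∂P ≤ C * h n := by
      have hpt : ∀ᵐ ω ∂P, (g (V 0 ω)) ^ 2 ≤ A.indicator (fun _ => b ^ 2) ω := by
        filter_upwards [hYb 0] with ω hω
        by_cases hK : K (((V 0 ω).1 - x) / h n) = 0
        · have hg0 : g (V 0 ω) = 0 := by rw [hg_def]; simp [hK]
          rw [hg0]
          simpa using Set.indicator_apply_nonneg (s := A)
            (f := fun _ : Ω => b ^ 2) (fun _ => by positivity) (a := ω)
        · have hmem := hKsupp _ hK
          rw [Set.mem_Icc] at hmem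
          have hd : ((V 0 ω).1 - x) = ((V 0 ω).1 - x) / h n * h n :=
            (div_mul_cancel₀ _ hhn.ne').symm
          have hAx : ω ∈ A := by
            rw [hA_def]
            simp only [Set.mem_preimage, Set.mem_Icc]
            constructor
            · nlinarith [hmem.1]
            · nlinarith [hmem.2]
          rw [Set.indicator_of_mem hAx]
          calc (g (V 0 ω)) ^ 2 = |g (V 0 ω)| ^ 2 := (sq_abs _).symm
            _ ≤ b ^ 2 := pow_le_pow_left₀ (abs_nonneg _) hω 2
      have hind_int : Integrable (A.indicator fun _ => b ^ 2) P :=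
        (integrable_const (b ^ 2)).indicator hAmeas
      calc ∫ ω, (g (V 0 ω)) ^ 2 ∂P ≤ ∫ ω, A.indicator (fun _ => b ^ 2) ω ∂P :=
          integral_mono_ae hY2int hind_int hpt
        _ = (P A).toReal * b ^ 2 := by
            rw [integral_indicator_const _ hAmeas]; simp [smul_eq_mul, measureReal_def]
        _ ≤ (bM * (2 * h n)) * b ^ 2 :=
            mul_le_mul_of_nonneg_right hPA (by positivity)
        _ = C * h n := by rw [hC_def]; ring
    have hW0sq : ∫ ω, (W 0 ω) ^ 2 ∂P ≤ C * h n := by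
      have hexp : ∀ ω, (W 0 ω) ^ 2 =
          (g (V 0 ω)) ^ 2 - (2 * μY * g (V 0 ω) - μY ^ 2) := by
        intro ω; rw [hW_def]; ring
      have hint2 : Integrable (fun ω => 2 * μY * g (V 0 ω) - μY ^ 2) P :=
        ((hYint 0).const_mul (2 * μY)).sub (integrable_const _)
      calc ∫ ω, (W 0 ω) ^ 2 ∂P
          = ∫ ω, ((g (V 0 ω)) ^ 2 - (2 * μY * g (V 0 ω) - μY ^ 2)) ∂P := by
            simp_rw [hexp]
        _ = (∫ ω, (g (V 0 ω)) ^ 2 ∂P) - ((2 * μY) * μY - μY ^ 2) := by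
            rw [integral_sub hY2int hint2, integral_sub ((hYint 0).const_mul (2 * μY))
              (integrable_const _), integral_const_mul, hident' 0, integral_const]
            simp
        _ ≤ C * h n := by nlinarith [sq_nonneg μY, hY0sq]
    intro i
    have hid : ∫ ω, (W i ω) ^ 2 ∂P = ∫ ω, (W 0 ω) ^ 2 ∂P := by
      have := ((hident i).comp ((hgmeas.sub_const μY).pow_const 2)).integral_eq
      simpa [Function.comp, hW_def] using this
    rw [hid]
    exact hW0sq
  -- Bernstein application and arithmetic
  set T : ℝ := ε₀ * Real.sqrt ((n:ℝ) * h n * Real.log n) with hT_def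
  set v : ℝ := C * ((n:ℝ) * h n) with hv_def
  have hvpos : 0 < v := by positivity
  have hTpos : 0 < T := mul_pos hε₀pos (Real.sqrt_pos.mpr (by positivity))
  set t : ℝ := min (1 / c) (T / (2 * v)) with ht_def
  have ht0 : 0 ≤ t := le_min (by positivity) (by positivity)
  have htc : t * c ≤ 1 := by
    have h1 : t ≤ 1 / c := min_le_left _ _
    calc t * c ≤ 1 / c * c := mul_le_mul_of_nonneg_right h1 hcpos.le
      _ = 1 := one_div_mul_cancel hcpos.ne'
  have hts : t ≤ T / (2 * v) := min_le_right _ _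
  have hT2 : T ^ 2 = 6 * C * ((n:ℝ) * h n * Real.log n) := by
    rw [hT_def, mul_pow, hε₀sq, Real.sq_sqrt (by positivity)]
  have hexp_bound : (3:ℝ) / 2 * Real.log n ≤ t * T - t ^ 2 * ((n:ℝ) * (C * h n)) := by
    have hv_eq : (n:ℝ) * (C * h n) = v := by rw [hv_def]; ring
    rw [hv_eq]
    have h1 : t ^ 2 * v ≤ t * T / 2 := by
      have h2 : t * v ≤ T / 2 := by
        calc t * v ≤ T / (2 * v) * v := mul_le_mul_of_nonneg_right hts hvpos.le
          _ = T / 2 := by field_simp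
      calc t ^ 2 * v = t * (t * v) := by ring
        _ ≤ t * (T / 2) := mul_le_mul_of_nonneg_left h2 ht0
        _ = t * T / 2 := by ring
    have h3 : 3 * Real.log n ≤ t * T := by
      rcases min_cases (1 / c) (T / (2 * v)) with ⟨heq, hle⟩ | ⟨heq, hle⟩
      · -- t = 1/c, and 1/c ≤ T/(2v)
        rw [ht_def, heq]
        have hsq : 3 * c / ε₀ ≤ Real.sqrt ((n:ℝ) * h n / Real.log n) :=
          (Real.le_sqrt (by positivity) (by positivity)).mpr hratio
        have hs_split : Real.sqrt ((n:ℝ) * h n * Real.log n) =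
            Real.sqrt ((n:ℝ) * h n / Real.log n) * Real.log n := by
          rw [← Real.sqrt_sq hlogpos.le, ← Real.sqrt_mul (by positivity)]
          rw [Real.sqrt_sq hlogpos.le]
          congr 1
          field_simp
        have hT_ge : 3 * c * Real.log n ≤ T := by
          rw [hT_def, hs_split]
          have := mul_le_mul_of_nonneg_right hsq hlogpos.le
          calc 3 * c * Real.log n = ε₀ * (3 * c / ε₀ * Real.log n) := by
                field_simp
            _ ≤ ε₀ * (Real.sqrt ((n:ℝ) * h n / Real.log n) * Real.log n) :=
                mul_le_mul_of_nonneg_left this hε₀pos.le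
        calc 3 * Real.log n = 1 / c * (3 * c * Real.log n) := by field_simp
          _ ≤ 1 / c * T := mul_le_mul_of_nonneg_left hT_ge (by positivity)
      · -- t = T/(2v)
        rw [ht_def, heq]
        have : T / (2 * v) * T = T ^ 2 / (2 * v) := by ring
        rw [this, hT2, hv_def]
        apply le_of_eq
        field_simp
        ring
    linarith
  have hfinal : Real.exp (-(t * T) + t ^ 2 * (n:ℝ) * (C * h n)) ≤
      (n:ℝ) ^ (-(3:ℝ) / 2) := by
    rw [Real.rpow_def_of_pos hnpos]
    apply Real.exp_le_exp.mpr
    nlinarith [hexp_bound]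
  -- Express S - E S via the centered sum
  have hintS : ∫ ω', S n x ω' ∂P = ((n:ℝ) * h n)⁻¹ * ((n:ℝ) * μY) := by
    have hrw : ∀ ω, S n x ω = ((n:ℝ) * h n)⁻¹ * ∑ i ∈ Finset.range n, g (V i ω) := by
      intro ω; rw [hS n x ω]
    simp_rw [hrw]
    rw [integral_const_mul, integral_finset_sum _ (fun i _ => hYint i)]
    congr 1
    simp [hident', Finset.sum_const, Finset.card_range, mul_comm]
  have hST : ∀ ω, S n x ω - ∫ ω', S n x ω' ∂P =
      ((n:ℝ) * h n)⁻¹ * ∑ i ∈ Finset.range n, W i ω := by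
    intro ω
    rw [hS n x ω, hintS, hW_def]
    have : ∑ i ∈ Finset.range n, (g (V i ω) - μY) =
        (∑ i ∈ Finset.range n, g (V i ω)) - (n:ℝ) * μY := by
      rw [Finset.sum_sub_distrib]
      simp [Finset.sum_const, Finset.card_range, mul_comm]
    rw [this]
    have hgv : ∀ i, (V i ω).2 * ((V i ω).1 - x) ^ γ * K (((V i ω).1 - x) / h n) =
        g (V i ω) := fun i => rfl
    simp_rw [hgv]
    ring
  -- the key event inclusion
  have hTeq : ε₀ * Real.sqrt (Real.log n / ((n:ℝ) * h n)) * ((n:ℝ) * h n) = T := by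
    rw [hT_def]
    have h2 : Real.log n / ((n:ℝ) * h n) * ((n:ℝ) * h n) ^ 2 =
        (n:ℝ) * h n * Real.log n := by field_simp
    calc ε₀ * Real.sqrt (Real.log n / ((n:ℝ) * h n)) * ((n:ℝ) * h n)
        = ε₀ * (Real.sqrt (Real.log n / ((n:ℝ) * h n)) *
            Real.sqrt (((n:ℝ) * h n) ^ 2)) := by
          rw [Real.sqrt_sq hnh.le]; ring
      _ = ε₀ * Real.sqrt (Real.log n / ((n:ℝ) * h n) * ((n:ℝ) * h n) ^ 2) := by
          rw [← Real.sqrt_mul (by positivity)]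
      _ = ε₀ * Real.sqrt ((n:ℝ) * h n * Real.log n) := by rw [h2]
  have hsub : {ω | ε₀ * Real.sqrt (Real.log n / ((n:ℝ) * h n)) <
      |S n x ω - ∫ ω', S n x ω' ∂P|} ⊆
      {ω | T ≤ ∑ i ∈ Finset.range n, W i ω} ∪
      {ω | T ≤ ∑ i ∈ Finset.range n, -(W i ω)} := by
    intro ω hω
    simp only [Set.mem_setOf_eq] at hω
    rw [hST ω, abs_mul, abs_of_nonneg (by positivity : (0:ℝ) ≤ ((n:ℝ) * h n)⁻¹)] at hω
    have hT_lt : T < |∑ i ∈ Finset.range n, W i ω| := by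
      rw [← hTeq]
      calc ε₀ * Real.sqrt (Real.log n / ((n:ℝ) * h n)) * ((n:ℝ) * h n)
          < ((n:ℝ) * h n)⁻¹ * |∑ i ∈ Finset.range n, W i ω| * ((n:ℝ) * h n) := by
            exact mul_lt_mul_of_pos_right hω hnh
        _ = |∑ i ∈ Finset.range n, W i ω| := by field_simp
    rcases lt_abs.mp hT_lt with hc1 | hc1
    · left; exact le_of_lt hc1
    · right
      simp only [Set.mem_setOf_eq, Finset.sum_neg_distrib]
      exact le_of_lt hc1
  -- apply Bernstein twice
  have hup := my_bernstein (P := P) n W hWmeas hWindep ht0 htc hWb hWmean hvar (T := T)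
  have hWnegindep : iIndepFun (fun i ω => -(W i ω)) P :=
    hWindep.comp (fun _ => fun y : ℝ => -y) (fun _ => measurable_neg)
  have hdown := my_bernstein (P := P) n (fun i ω => -(W i ω))
    (fun i => (hWmeas i).neg) hWnegindep ht0 htc
    (fun i => by filter_upwards [hWb i] with ω hω; simpa [abs_neg] using hω)
    (fun i => by rw [integral_neg, hWmean i]; simp)
    (fun i => by simpa [neg_sq] using hvar i) (T := T)
  calc (P {ω | ε₀ * Real.sqrt (Real.log n / ((n:ℝ) * h n)) <
        |S n x ω - ∫ ω', S n x ω' ∂P|}).toReal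
      ≤ (P ({ω | T ≤ ∑ i ∈ Finset.range n, W i ω} ∪
          {ω | T ≤ ∑ i ∈ Finset.range n, -(W i ω)})).toReal :=
        ENNReal.toReal_mono (measure_ne_top _ _) (measure_mono hsub)
    _ ≤ (P {ω | T ≤ ∑ i ∈ Finset.range n, W i ω} +
          P {ω | T ≤ ∑ i ∈ Finset.range n, -(W i ω)}).toReal :=
        ENNReal.toReal_mono (ENNReal.add_ne_top.mpr
          ⟨measure_ne_top _ _, measure_ne_top _ _⟩) (measure_union_le _ _)
    _ = (P {ω | T ≤ ∑ i ∈ Finset.range n, W i ω}).toReal +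
          (P {ω | T ≤ ∑ i ∈ Finset.range n, -(W i ω)}).toReal :=
        ENNReal.toReal_add (measure_ne_top _ _) (measure_ne_top _ _)
    _ ≤ Real.exp (-(t * T) + t ^ 2 * (n:ℝ) * (C * h n)) +
          Real.exp (-(t * T) + t ^ 2 * (n:ℝ) * (C * h n)) := add_le_add hup hdown
    _ ≤ (n:ℝ) ^ (-(3:ℝ) / 2) + (n:ℝ) ^ (-(3:ℝ) / 2) := add_le_add hfinal hfinal
    _ = 2 * (n:ℝ) ^ (-(3:ℝ) / 2) := by ring
end
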